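/- Let G be a finite simple graph and let F = [S, V\S] be a nonempty edge cut of G (S a nonempty proper subset of the vertex set) such that all edges of F are incident to a single common vertex in S (the edges of F form a star). Then E(G - F) < E(G) strictly. -/

import Mathlib

open Finset

namespace EnergyProofAux

open Matrix

variable {n : Type*} [Fintype n] [DecidableEq n]

noncomputable def sumAbsEig (X : Matrix n n ℝ) (hX : X.IsHermitian) : ℝ :=
  ∑ i, |hX.eigenvalues i|

lemma sumAbsEig_congr {X Y : Matrix n n ℝ} (h : X = Y) (hX : X.IsHermitian)
    (hY : Y.IsHermitian) : sumAbsEig X hX = sumAbsEig Y hY := by subst h; rfl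

section spectral

variable {X : Matrix n n ℝ} (hX : X.IsHermitian)

noncomputable def eV (hX : X.IsHermitian) : Matrix n n ℝ := hX.eigenvectorUnitary

lemma eV_star_mul : star (eV hX) * eV hX = 1 :=
  (Matrix.mem_unitaryGroup_iff'.mp (hX.eigenvectorUnitary).2)

lemma eV_mul_star : eV hX * star (eV hX) = 1 :=
  (Matrix.mem_unitaryGroup_iff.mp (hX.eigenvectorUnitary).2)

noncomputable def conjD (hX : X.IsHermitian) (d : n → ℝ) : Matrix n n ℝ :=
  eV hX * Matrix.diagonal d * star (eV hX)

lemma spectral : X = conjD hX hX.eigenvalues := by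
  have h := hX.spectral_theorem
  rwa [RCLike.ofReal_real_eq_id, Function.id_comp] at h

lemma conjD_mul (d e : n → ℝ) : conjD hX d * conjD hX e = conjD hX (d * e) := by
  unfold conjD
  simp only [mul_assoc]
  rw [← mul_assoc (star (eV hX)) (eV hX), eV_star_mul, one_mul,
    ← mul_assoc (diagonal d), diagonal_mul_diagonal]
  rfl

lemma conjD_one : conjD hX 1 = 1 := by
  unfold conjD
  rw [show Matrix.diagonal (1 : n → ℝ) = (1 : Matrix n n ℝ) from diagonal_one, mul_one,
    eV_mul_star]

lemma trace_conjD (d : n → ℝ) : trace (conjD hX d) = ∑ i, d i := by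
  unfold conjD
  rw [trace_mul_cycle, eV_star_mul, one_mul, trace_diagonal]

lemma conjD_apply (d : n → ℝ) (i j : n) :
    conjD hX d i j = ∑ k, d k * (eV hX i k * eV hX j k) := by
  unfold conjD
  rw [mul_apply]
  refine Finset.sum_congr rfl fun k _ => ?_
  rw [mul_diagonal, star_apply, star_trivial]
  ring

lemma conjD_comm (d : n → ℝ) (i j : n) : conjD hX d i j = conjD hX d j i := by
  rw [conjD_apply, conjD_apply]
  exact Finset.sum_congr rfl fun k _ => by ring

lemma conjD_isHermitian (d : n → ℝ) : (conjD hX d).IsHermitian := by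
  ext i j
  rw [conjTranspose_apply, star_trivial, conjD_comm]

lemma eV_apply_eq_zero {j k : n} (hj : ∀ m, X j m = 0)
    (hk : hX.eigenvalues k ≠ 0) : eV hX j k = 0 := by
  have h2 : conjD hX hX.eigenvalues * eV hX = eV hX * diagonal hX.eigenvalues := by
    unfold conjD
    rw [mul_assoc, eV_star_mul, mul_one]
  have hXV : X * eV hX = eV hX * diagonal hX.eigenvalues :=
    (congrArg (fun M => M * eV hX) (spectral hX)).trans h2
  have this : (X * eV hX) j k = (eV hX * diagonal hX.eigenvalues) j k := by rw [hXV]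
  rw [mul_apply, mul_diagonal] at this
  have h0 : (0:ℝ) = eV hX j k * hX.eigenvalues k := by
    rw [← this]
    exact (Finset.sum_eq_zero fun m _ => by rw [hj m, zero_mul]).symm
  exact (mul_eq_zero.mp h0.symm).resolve_right hk

lemma conjD_apply_of_rowzero {d : n → ℝ} {c : ℝ}
    (hc : ∀ k, hX.eigenvalues k = 0 → d k = c) {j : n} (hj : ∀ m, X j m = 0) (i : n) :
    conjD hX d i j = c * (1 : Matrix n n ℝ) i j := by
  have h1 : (1 : Matrix n n ℝ) i j = ∑ k, (1:ℝ) * (eV hX i k * eV hX j k) := by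
    have := conjD_apply hX (fun _ => (1:ℝ)) i j
    rwa [show conjD hX (fun _ => (1:ℝ)) = 1 from by
      exact conjD_one hX] at this
  rw [conjD_apply, h1, Finset.mul_sum]
  refine Finset.sum_congr rfl fun k _ => ?_
  by_cases hk : hX.eigenvalues k = 0
  · rw [hc k hk]; ring
  · rw [eV_apply_eq_zero hX hj hk]; ring


noncomputable def signU (hX : X.IsHermitian) : Matrix n n ℝ :=
  conjD hX (fun i => if hX.eigenvalues i < 0 then -1 else 1)

noncomputable def absM (hX : X.IsHermitian) : Matrix n n ℝ :=
  conjD hX (fun i => |hX.eigenvalues i|)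

lemma sign_mul_eq_abs :
    (hX.eigenvalues * fun i => if hX.eigenvalues i < 0 then (-1:ℝ) else 1) =
      (fun i => |hX.eigenvalues i|) := by
  funext i
  rw [Pi.mul_apply]
  by_cases h : hX.eigenvalues i < 0
  · rw [if_pos h, abs_of_neg h]; ring
  · rw [if_neg h, abs_of_nonneg (not_lt.mp h), mul_one]

lemma mul_signU : X * signU hX = absM hX := by
  conv_lhs => rw [(congrArg (fun M => M * signU hX) (spectral hX) : _)]
  unfold signU absM
  rw [conjD_mul, sign_mul_eq_abs hX]

lemma signU_mul_self : signU hX * signU hX = 1 := by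
  unfold signU
  rw [conjD_mul]
  rw [show ((fun i => if hX.eigenvalues i < 0 then (-1:ℝ) else 1) *
      (fun i => if hX.eigenvalues i < 0 then (-1:ℝ) else 1)) = 1 from ?_, conjD_one]
  funext i
  rw [Pi.mul_apply, Pi.one_apply]
  by_cases h : hX.eigenvalues i < 0
  · rw [if_pos h]; ring
  · rw [if_neg h]; ring

lemma absM_posSemidef : (absM hX).PosSemidef := by
  have hd : (Matrix.diagonal (fun i => |hX.eigenvalues i|)).PosSemidef :=
    Matrix.PosSemidef.diagonal (fun i => abs_nonneg _)
  exact hd.mul_mul_conjTranspose_same (eV hX)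

lemma absM_sq : absM hX * absM hX = X * X := by
  conv_rhs => rw [(congrArg (fun M => M * X) (spectral hX) : _)]
  conv_rhs => rw [(congrArg (fun M => conjD hX hX.eigenvalues * M) (spectral hX) : _)]
  unfold absM
  rw [conjD_mul, conjD_mul,
    show ((fun i => |hX.eigenvalues i|) * fun i => |hX.eigenvalues i|) =
        hX.eigenvalues * hX.eigenvalues from
      funext fun i => by rw [Pi.mul_apply, Pi.mul_apply, abs_mul_abs_self]]

lemma trace_absM : trace (absM hX) = sumAbsEig X hX := trace_conjD hX _

lemma trace_mul_le_and_eq (U : Matrix n n ℝ)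
    (h1 : star U * U = 1) (h2 : U * star U = 1) :
    trace (X * U) ≤ sumAbsEig X hX ∧
      (trace (X * U) = sumAbsEig X hX → X * U = absM hX) := by
  set V := eV hX with hV
  set O := star V * U * V with hO
  set lam := hX.eigenvalues with hlam
  have hVs : star V * V = 1 := eV_star_mul hX
  have hVm : V * star V = 1 := eV_mul_star hX
  have hOstar : star O = star V * star U * V := by
    rw [hO, Matrix.star_mul, Matrix.star_mul, star_star, ← mul_assoc]
  have hO1 : star O * O = 1 := by
    rw [hOstar, hO]
    calc star V * star U * V * (star V * U * V)
        = star V * star U * (V * star V) * U * V := by noncomm_ring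
      _ = 1 := by rw [hVm, mul_one, mul_assoc (star V), h1, mul_one, hVs]
  have hO2 : O * star O = 1 := by
    rw [hOstar, hO]
    calc star V * U * V * (star V * star U * V)
        = star V * U * (V * star V) * star U * V := by noncomm_ring
      _ = 1 := by rw [hVm, mul_one, mul_assoc (star V), h2, mul_one, hVs]
  have key : X * U = V * (diagonal lam * O) * star V := by
    conv_lhs => rw [(congrArg (fun M => M * U) (spectral hX) : _)]
    unfold conjD
    rw [hO, ← hV, ← hlam]
    simp only [mul_assoc]
    rw [hVm]
    simp only [mul_one]
  have htr : trace (X * U) = ∑ i, lam i * O i i := by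
    rw [key, trace_mul_cycle, ← mul_assoc, hVs, one_mul, trace]
    refine Finset.sum_congr rfl fun i _ => ?_
    rw [Matrix.diag_apply, Matrix.diagonal_mul]
  have hcolsq : ∀ i, ∑ k, (O k i)^2 = 1 := by
    intro i
    have h : (star O * O) i i = (1 : Matrix n n ℝ) i i := by rw [hO1]
    rw [mul_apply, one_apply_eq] at h
    rw [← h]
    refine Finset.sum_congr rfl fun k _ => ?_
    rw [star_apply, star_trivial]; ring
  have hrowsq : ∀ i, ∑ k, (O i k)^2 = 1 := by
    intro i
    have h : (O * star O) i i = (1 : Matrix n n ℝ) i i := by rw [hO2]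
    rw [mul_apply, one_apply_eq] at h
    rw [← h]
    refine Finset.sum_congr rfl fun k _ => ?_
    rw [star_apply, star_trivial]; ring
  have hOd : ∀ i, |O i i| ≤ 1 := by
    intro i
    rw [← sq_le_one_iff_abs_le_one, ← hcolsq i]
    exact Finset.single_le_sum (fun k _ => sq_nonneg (O k i)) (Finset.mem_univ i)
  have hterm : ∀ i, lam i * O i i ≤ |lam i| :=
    fun i => (le_abs_self _).trans (by
      rw [abs_mul]
      calc |lam i| * |O i i| ≤ |lam i| * 1 :=
            mul_le_mul_of_nonneg_left (hOd i) (abs_nonneg _)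
        _ = |lam i| := mul_one _)
  constructor
  · rw [htr]
    exact Finset.sum_le_sum fun i _ => hterm i
  · intro heq
    rw [htr] at heq
    have hall : ∀ i ∈ Finset.univ, lam i * O i i = |lam i| :=
      (Finset.sum_eq_sum_iff_of_le (fun i _ => hterm i)).mp heq
    have hDO : diagonal lam * O = diagonal (fun i => |lam i|) := by
      ext i j
      rw [Matrix.diagonal_mul]
      by_cases hij : i = j
      · subst hij
        rw [diagonal_apply_eq]
        exact hall i (Finset.mem_univ i)
      · rw [diagonal_apply_ne _ hij]
        by_cases hl : lam i = 0
        · rw [hl, zero_mul]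
        · have h := hall i (Finset.mem_univ i)
          have h2 : (lam i * O i i) * (lam i * O i i) = lam i * lam i := by
            rw [h, abs_mul_abs_self]
          have h4 : (lam i * lam i) * (O i i)^2 = (lam i * lam i) * 1 := by
            linear_combination h2
          have hOii : (O i i)^2 = 1 := mul_left_cancel₀ (mul_ne_zero hl hl) h4
          have hrest : ∑ k ∈ Finset.univ.erase i, (O i k)^2 = 0 := by
            have hs := hrowsq i
            rw [← Finset.add_sum_erase _ _ (Finset.mem_univ i)] at hs
            linarith [hOii]
          have hz : (O i j)^2 = 0 :=
            (Finset.sum_eq_zero_iff_of_nonneg (fun k _ => sq_nonneg (O i k))).mp hrest j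
              (Finset.mem_erase.mpr ⟨fun h' => hij h'.symm, Finset.mem_univ j⟩)
          rw [pow_eq_zero_iff (two_ne_zero)] at hz
          rw [hz, mul_zero]
    rw [key, hDO]
    rfl

end spectral

lemma sum_two_ite (f : n → ℝ) (a b : n) (hab : a ≠ b) (t : ℝ) :
    ∑ j, f j * (t * (if j = a then (1:ℝ) else 0) + (if j = b then 1 else 0))
      = t * f a + f b := by
  have h : ∀ j, f j * (t * (if j = a then (1:ℝ) else 0) + (if j = b then 1 else 0))
      = (if j = a then t * f j else 0) + (if j = b then f j else 0) := by
    intro j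
    by_cases hja : j = a <;> by_cases hjb : j = b
    · exact absurd (hja.symm.trans hjb) hab
    · rw [if_pos hja, if_pos hja, if_neg hjb, if_neg hjb]; ring
    · rw [if_neg hja, if_neg hja, if_pos hjb, if_pos hjb]; ring
    · rw [if_neg hja, if_neg hja, if_neg hjb, if_neg hjb]; ring
  rw [Finset.sum_congr rfl (fun j _ => h j), Finset.sum_add_distrib,
    Finset.sum_ite_eq' Finset.univ a (fun j => t * f j),
    Finset.sum_ite_eq' Finset.univ b f, if_pos (Finset.mem_univ a),
    if_pos (Finset.mem_univ b)]

lemma quad_expand (M : Matrix n n ℝ) (a b : n) (hab : a ≠ b) (t : ℝ) :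
    dotProduct
      (star (fun k => t * (if k = a then (1:ℝ) else 0) + (if k = b then 1 else 0)))
      (M *ᵥ (fun k => t * (if k = a then (1:ℝ) else 0) + (if k = b then 1 else 0))) =
    t * t * M a a + t * M a b + t * M b a + M b b := by
  have hstar : (star (fun k => t * (if k = a then (1:ℝ) else 0) + (if k = b then 1 else 0))
      : n → ℝ) = fun k => t * (if k = a then (1:ℝ) else 0) + (if k = b then 1 else 0) :=
    funext fun k => star_trivial _
  rw [hstar]
  have hmv : ∀ i, (M *ᵥ (fun k => t * (if k = a then (1:ℝ) else 0)
      + (if k = b then 1 else 0))) i = t * M i a + M i b := by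
    intro i
    rw [Matrix.mulVec, dotProduct]
    exact sum_two_ite (fun j => M i j) a b hab t
  rw [dotProduct]
  simp only [hmv]
  have h2 : ∑ i, (t * (if i = a then (1:ℝ) else 0) + (if i = b then 1 else 0))
      * (t * M i a + M i b)
      = ∑ i, (t * M i a + M i b) * (t * (if i = a then (1:ℝ) else 0)
        + (if i = b then 1 else 0)) := Finset.sum_congr rfl fun i _ => by ring
  rw [h2, sum_two_ite (fun i => t * M i a + M i b) a b hab t]
  ring

end EnergyProofAux

open Matrix EnergyProofAux

noncomputable def graphEnergy {V : Type*} [Fintype V] [DecidableEq V] (G : SimpleGraph V) : ℝ :=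
  have : DecidableRel G.Adj := Classical.decRel _
  ∑ i, |(show (G.adjMatrix ℝ).IsHermitian by
      rw [Matrix.IsHermitian, Matrix.conjTranspose_eq_transpose_of_trivial]
      exact G.isSymm_adjMatrix).eigenvalues i|

open EnergyProofAux Matrix in
lemma adjMatrix_isHermitian' {V : Type*} [Fintype V] [DecidableEq V] (G : SimpleGraph V)
    [DecidableRel G.Adj] : (G.adjMatrix ℝ).IsHermitian := by
  rw [Matrix.IsHermitian, Matrix.conjTranspose_eq_transpose_of_trivial]
  exact G.isSymm_adjMatrix

open EnergyProofAux Matrix in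
lemma graphEnergy_eq_sumAbsEig {V : Type*} [Fintype V] [DecidableEq V] (G : SimpleGraph V)
    [inst : DecidableRel G.Adj] (h : (G.adjMatrix ℝ).IsHermitian) :
    graphEnergy G = sumAbsEig (G.adjMatrix ℝ) h := by
  have hmatEq : @SimpleGraph.adjMatrix ℝ V G (Classical.decRel _) _ _ = G.adjMatrix ℝ := by
    rw [Subsingleton.elim (Classical.decRel G.Adj : DecidableRel G.Adj) inst]
  have h2 : (@SimpleGraph.adjMatrix ℝ V G (Classical.decRel _) _ _).IsHermitian := by
    rw [hmatEq]; exact h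
  have e : graphEnergy G = sumAbsEig (@SimpleGraph.adjMatrix ℝ V G (Classical.decRel _) _ _) h2 :=
    rfl
  rw [e]
  exact sumAbsEig_congr hmatEq h2 h

theorem energy_deleteEdgeCut_star_lt {V : Type*} [Fintype V] [DecidableEq V]
    (G : SimpleGraph V) (S : Set V) (hS : S.Nonempty) (hS' : S ≠ Set.univ)
    (F : Set (Sym2 V))
    (hF : F = {e | e ∈ G.edgeSet ∧ ∃ a b, e = s(a, b) ∧ a ∈ S ∧ b ∉ S})
    (hne : F.Nonempty)
    (v : V) (hv : v ∈ S) (hstar : ∀ e ∈ F, v ∈ e) :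
    graphEnergy (G.deleteEdges F) < graphEnergy G := by
  classical
  set Gd := G.deleteEdges F with hGdDef
  set A : Matrix V V ℝ := G.adjMatrix ℝ with hAdef
  set Dm : Matrix V V ℝ := Gd.adjMatrix ℝ with hDmdef
  have hAherm : A.IsHermitian := adjMatrix_isHermitian' G
  have hDmherm : Dm.IsHermitian := adjMatrix_isHermitian' Gd
  have hAsymm : ∀ i j, A i j = A j i := fun i j => by
    rw [hAdef, SimpleGraph.adjMatrix_apply, SimpleGraph.adjMatrix_apply]
    exact if_congr (G.adj_comm i j) rfl rfl
  have hDsymm : ∀ i j, Dm i j = Dm j i := fun i j => by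
    rw [hDmdef, SimpleGraph.adjMatrix_apply, SimpleGraph.adjMatrix_apply]
    exact if_congr (Gd.adj_comm i j) rfl rfl
  -- cross edges of G are in F
  have cross_F : ∀ i j, i ∈ S → j ∉ S → G.Adj i j → s(i, j) ∈ F := by
    intro i j hi hj hadj
    rw [hF]
    exact ⟨(SimpleGraph.mem_edgeSet G).mpr hadj, i, j, rfl, hi, hj⟩
  -- Dm has no cross entries
  have hDm_cross : ∀ i j, i ∈ S → j ∉ S → Dm i j = 0 := by
    intro i j hi hj
    rw [hDmdef, SimpleGraph.adjMatrix_apply, if_neg]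
    intro hadj
    rw [hGdDef, SimpleGraph.deleteEdges_adj] at hadj
    exact hadj.2 (cross_F i j hi hj hadj.1)
  have hDm_cross' : ∀ i j, i ∉ S → j ∈ S → Dm i j = 0 := fun i j hi hj => by
    rw [hDsymm]; exact hDm_cross j i hj hi
  -- A cross entries vanish away from v
  have hA_cross : ∀ i j, i ∈ S → j ∉ S → i ≠ v → A i j = 0 := by
    intro i j hi hj hiv
    rw [hAdef, SimpleGraph.adjMatrix_apply, if_neg]
    intro hadj
    have hmem := hstar _ (cross_F i j hi hj hadj)
    rcases Sym2.mem_iff.mp hmem with h | h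
    · exact hiv h.symm
    · exact hj (h ▸ hv)
  have hA_cross' : ∀ i j, i ∉ S → j ∈ S → j ≠ v → A i j = 0 := fun i j hi hj hjv => by
    rw [hAsymm]; exact hA_cross j i hj hi hjv
  -- the special cross neighbor j0
  obtain ⟨e, he⟩ := hne
  have he' := he
  rw [hF] at he'
  obtain ⟨heE, a, b, rfl, haS, hbS⟩ := he'
  have hva : v = a := by
    rcases Sym2.mem_iff.mp (hstar _ he) with h | h
    · exact h
    · exact absurd (h ▸ hv) hbS
  subst hva
  set j0 := b with hj0def
  have hj0S : j0 ∉ S := hbS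
  have hAdjvj0 : G.Adj v j0 := (SimpleGraph.mem_edgeSet G).mp heE
  have hAvj0 : A v j0 = 1 := by
    rw [hAdef, SimpleGraph.adjMatrix_apply, if_pos hAdjvj0]
  have hvj0 : v ≠ j0 := fun h => hj0S (h ▸ hv)
  -- where A and Dm differ
  have hA_D_ne : ∀ i j, A i j ≠ Dm i j → (i = v ∧ j ∉ S) ∨ (j = v ∧ i ∉ S) := by
    intro i j hne'
    by_cases hadj : G.Adj i j
    · by_cases hFe : s(i, j) ∈ F
      · have hmem := hstar _ hFe
        have hF' := hFe
        rw [hF] at hF'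
        obtain ⟨-, a', b', heq, ha', hb'⟩ := hF'
        rcases Sym2.eq_iff.mp heq with ⟨hia, hjb⟩ | ⟨hib, hja⟩
        · left
          refine ⟨?_, hjb ▸ hb'⟩
          rcases Sym2.mem_iff.mp hmem with h | h
          · exact h.symm
          · exact absurd (h ▸ hv) (hjb ▸ hb')
        · right
          refine ⟨?_, hib ▸ hb'⟩
          rcases Sym2.mem_iff.mp hmem with h | h
          · exact absurd (h ▸ hv) (hib ▸ hb')
          · exact h.symm
      · exfalso
        apply hne'
        rw [hAdef, hDmdef, SimpleGraph.adjMatrix_apply, SimpleGraph.adjMatrix_apply,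
          if_pos hadj, if_pos]
        rw [hGdDef, SimpleGraph.deleteEdges_adj]
        exact ⟨hadj, hFe⟩
    · exfalso
      apply hne'
      rw [hAdef, hDmdef, SimpleGraph.adjMatrix_apply, SimpleGraph.adjMatrix_apply,
        if_neg hadj, if_neg]
      intro hadj'
      rw [hGdDef, SimpleGraph.deleteEdges_adj] at hadj'
      exact hadj hadj'.1
    -- block matrices
  set D1 : Matrix V V ℝ := Matrix.of (fun i j => if i ∈ S ∧ j ∈ S then Dm i j else 0) with hD1def
  set D2 : Matrix V V ℝ := Matrix.of (fun i j => if i ∉ S ∧ j ∉ S then Dm i j else 0) with hD2def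
  have hD1app : ∀ i j, D1 i j = if i ∈ S ∧ j ∈ S then Dm i j else 0 := fun i j => rfl
  have hD2app : ∀ i j, D2 i j = if i ∉ S ∧ j ∉ S then Dm i j else 0 := fun i j => rfl
  have hD1herm : D1.IsHermitian := by
    ext i j
    rw [Matrix.conjTranspose_apply, star_trivial, hD1app, hD1app, hDsymm j i]
    exact if_congr and_comm rfl rfl
  have hD2herm : D2.IsHermitian := by
    ext i j
    rw [Matrix.conjTranspose_apply, star_trivial, hD2app, hD2app, hDsymm j i]
    exact if_congr and_comm rfl rfl
  have hsplit : Dm = D1 + D2 := by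
    ext i j
    rw [Matrix.add_apply, hD1app, hD2app]
    by_cases hi : i ∈ S <;> by_cases hj : j ∈ S
    · rw [if_pos ⟨hi, hj⟩, if_neg (fun h => h.1 hi), add_zero]
    · rw [if_neg (fun h => hj h.2), if_neg (fun h => h.1 hi), hDm_cross i j hi hj, add_zero]
    · rw [if_neg (fun h => hi h.1), if_neg (fun h => h.2 hj), hDm_cross' i j hi hj, zero_add]
    · rw [if_neg (fun h => hi h.1), if_pos ⟨hi, hj⟩, zero_add]
  have hD1row : ∀ j, j ∉ S → ∀ m, D1 j m = 0 := fun j hj m => by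
    rw [hD1app, if_neg (fun h => hj h.1)]
  have hD2row : ∀ j, j ∈ S → ∀ m, D2 j m = 0 := fun j hj m => by
    rw [hD2app, if_neg (fun h => h.1 hj)]
  have hD1col : ∀ j, j ∉ S → ∀ m, D1 m j = 0 := fun j hj m => by
    rw [hD1app, if_neg (fun h => hj h.2)]
  have hD2col : ∀ j, j ∈ S → ∀ m, D2 m j = 0 := fun j hj m => by
    rw [hD2app, if_neg (fun h => h.2 hj)]
  -- sign unitaries
  set U1 : Matrix V V ℝ := signU hD1herm with hU1def
  set U2 : Matrix V V ℝ := signU hD2herm with hU2def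
  have hsc1 : ∀ k, hD1herm.eigenvalues k = 0 →
      (if hD1herm.eigenvalues k < 0 then (-1:ℝ) else 1) = 1 := fun k hk => by
    rw [if_neg (by rw [hk]; exact lt_irrefl 0)]
  have hsc2 : ∀ k, hD2herm.eigenvalues k = 0 →
      (if hD2herm.eigenvalues k < 0 then (-1:ℝ) else 1) = 1 := fun k hk => by
    rw [if_neg (by rw [hk]; exact lt_irrefl 0)]
  have hac1 : ∀ k, hD1herm.eigenvalues k = 0 → |hD1herm.eigenvalues k| = 0 := fun k hk => by
    rw [hk, abs_zero]
  have hac2 : ∀ k, hD2herm.eigenvalues k = 0 → |hD2herm.eigenvalues k| = 0 := fun k hk => by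
    rw [hk, abs_zero]
  have hU1col : ∀ j, j ∉ S → ∀ i, U1 i j = (1 : Matrix V V ℝ) i j := fun j hj i => by
    have h := conjD_apply_of_rowzero hD1herm hsc1 (hD1row j hj) i
    rwa [one_mul] at h
  have hU1row : ∀ j, j ∉ S → ∀ i, U1 j i = (1 : Matrix V V ℝ) j i := fun j hj i => by
    rw [hU1def, signU, conjD_comm]
    rw [show conjD hD1herm (fun k => if hD1herm.eigenvalues k < 0 then (-1:ℝ) else 1) i j
        = U1 i j from rfl, hU1col j hj i, Matrix.one_apply, Matrix.one_apply]
    exact if_congr eq_comm rfl rfl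
  have hU2col : ∀ j, j ∈ S → ∀ i, U2 i j = (1 : Matrix V V ℝ) i j := fun j hj i => by
    have h := conjD_apply_of_rowzero hD2herm hsc2 (hD2row j hj) i
    rwa [one_mul] at h
  have hU2row : ∀ j, j ∈ S → ∀ i, U2 j i = (1 : Matrix V V ℝ) j i := fun j hj i => by
    rw [hU2def, signU, conjD_comm]
    rw [show conjD hD2herm (fun k => if hD2herm.eigenvalues k < 0 then (-1:ℝ) else 1) i j
        = U2 i j from rfl, hU2col j hj i, Matrix.one_apply, Matrix.one_apply]
    exact if_congr eq_comm rfl rfl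
  have habs1col : ∀ j, j ∉ S → ∀ i, absM hD1herm i j = 0 := fun j hj i => by
    have h := conjD_apply_of_rowzero hD1herm hac1 (hD1row j hj) i
    rwa [zero_mul] at h
  have habs2row : ∀ j, j ∈ S → ∀ i, absM hD2herm j i = 0 := fun j hj i => by
    rw [absM, conjD_comm]
    exact conjD_apply_of_rowzero hD2herm hac2 (hD2row j hj) i |>.trans (zero_mul _)
  have habs2col : ∀ j, j ∈ S → ∀ i, absM hD2herm i j = 0 := fun j hj i => by
    have h := conjD_apply_of_rowzero hD2herm hac2 (hD2row j hj) i
    rwa [zero_mul] at h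
  have habs1row : ∀ j, j ∉ S → ∀ i, absM hD1herm j i = 0 := fun j hj i => by
    rw [absM, conjD_comm]
    exact conjD_apply_of_rowzero hD1herm hac1 (hD1row j hj) i |>.trans (zero_mul _)
  set U0 : Matrix V V ℝ := U1 + U2 - 1 with hU0def
  have hU11 : U1 * U1 = 1 := signU_mul_self hD1herm
  have hU22 : U2 * U2 = 1 := signU_mul_self hD2herm
  have hfact : (U1 - 1) * (U2 - 1) = 0 := by
    ext i j
    rw [Matrix.mul_apply, Matrix.zero_apply]
    refine Finset.sum_eq_zero fun k _ => ?_
    by_cases hk : k ∈ S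
    · rw [Matrix.sub_apply, Matrix.sub_apply, hU2row k hk j, sub_self, mul_zero]
    · rw [Matrix.sub_apply, Matrix.sub_apply, hU1col k hk i, sub_self, zero_mul]
  have hfact' : (U2 - 1) * (U1 - 1) = 0 := by
    ext i j
    rw [Matrix.mul_apply, Matrix.zero_apply]
    refine Finset.sum_eq_zero fun k _ => ?_
    by_cases hk : k ∈ S
    · rw [Matrix.sub_apply, Matrix.sub_apply, hU2col k hk i, sub_self, zero_mul]
    · rw [Matrix.sub_apply, Matrix.sub_apply, hU1row k hk j, sub_self, mul_zero]
  have h12 : U1 * U2 = U0 := by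
    have h : U1 * U2 - U1 - U2 + 1 = 0 := by
      calc U1 * U2 - U1 - U2 + 1 = (U1 - 1) * (U2 - 1) := by noncomm_ring
        _ = 0 := hfact
    rw [hU0def]
    have := sub_eq_zero.mp (by linear_combination (norm := noncomm_ring) h :
      (U1 * U2) - (U1 + U2 - 1) = 0)
    exact this
  have h21 : U2 * U1 = U0 := by
    have h : U2 * U1 - U2 - U1 + 1 = 0 := by
      calc U2 * U1 - U2 - U1 + 1 = (U2 - 1) * (U1 - 1) := by noncomm_ring
        _ = 0 := hfact'
    rw [hU0def]
    exact sub_eq_zero.mp (by linear_combination (norm := noncomm_ring) h :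
      (U2 * U1) - (U1 + U2 - 1) = 0)
  have hU0sq : U0 * U0 = 1 := by
    have e1 : U0 * U0 =
        (U1 * U1) + (U1 * U2) + (U2 * U1) + (U2 * U2) - U1 - U2 - U1 - U2 + 1 := by
      rw [hU0def]; noncomm_ring
    rw [e1, hU11, hU22, h12, h21, hU0def]
    abel
  have hU1herm : U1ᴴ = U1 := conjD_isHermitian hD1herm _
  have hU2herm : U2ᴴ = U2 := conjD_isHermitian hD2herm _
  have hU0star : star U0 = U0 := by
    rw [hU0def, Matrix.star_eq_conjTranspose, Matrix.conjTranspose_sub,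
      Matrix.conjTranspose_add, hU1herm, hU2herm, Matrix.conjTranspose_one]
  have hU0symm : ∀ i j, U0 i j = U0 j i := by
    intro i j
    have h : U0ᴴ i j = U0 i j := by rw [← Matrix.star_eq_conjTranspose, hU0star]
    rw [Matrix.conjTranspose_apply, star_trivial] at h
    exact h.symm
  have hU0cross : ∀ a b, a ∈ S → b ∉ S → U0 a b = 0 := by
    intro a b ha hb
    have hab : a ≠ b := fun h => hb (h ▸ ha)
    rw [hU0def, Matrix.sub_apply, Matrix.add_apply, hU1col b hb a, hU2row a ha b,
      Matrix.one_apply_ne hab]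
    ring
  have hU0cross' : ∀ a b, a ∉ S → b ∈ S → U0 a b = 0 := fun a b ha hb => by
    rw [hU0symm]; exact hU0cross b a hb ha
  -- D * U0 = |D1| + |D2|
  have hD1U2 : D1 * (U2 - 1) = 0 := by
    ext i j
    rw [Matrix.mul_apply, Matrix.zero_apply]
    refine Finset.sum_eq_zero fun k _ => ?_
    by_cases hk : k ∈ S
    · rw [Matrix.sub_apply, hU2row k hk j, sub_self, mul_zero]
    · rw [hD1col k hk i, zero_mul]
  have hD2U1 : D2 * (U1 - 1) = 0 := by
    ext i j
    rw [Matrix.mul_apply, Matrix.zero_apply]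
    refine Finset.sum_eq_zero fun k _ => ?_
    by_cases hk : k ∈ S
    · rw [hD2col k hk i, zero_mul]
    · rw [Matrix.sub_apply, hU1row k hk j, sub_self, mul_zero]
  have hDU0 : Dm * U0 = absM hD1herm + absM hD2herm := by
    have e1 : Dm * U0 = D1 * U1 + D1 * (U2 - 1) + (D2 * U2 + D2 * (U1 - 1)) := by
      rw [hsplit, hU0def]; noncomm_ring
    rw [e1, hD1U2, hD2U1, add_zero, add_zero, hU1def, hU2def,
      mul_signU hD1herm, mul_signU hD2herm]
  set M0 : Matrix V V ℝ := absM hD1herm + absM hD2herm with hM0def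
  have hM0psd : M0.PosSemidef := (absM_posSemidef hD1herm).add (absM_posSemidef hD2herm)
  have habs12 : absM hD1herm * absM hD2herm = 0 := by
    ext i j
    rw [Matrix.mul_apply, Matrix.zero_apply]
    refine Finset.sum_eq_zero fun k _ => ?_
    by_cases hk : k ∈ S
    · rw [habs2row k hk j, mul_zero]
    · rw [habs1col k hk i, zero_mul]
  have habs21 : absM hD2herm * absM hD1herm = 0 := by
    ext i j
    rw [Matrix.mul_apply, Matrix.zero_apply]
    refine Finset.sum_eq_zero fun k _ => ?_
    by_cases hk : k ∈ S
    · rw [habs2col k hk i, zero_mul]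
    · rw [habs1row k hk j, mul_zero]
  have hD12 : D1 * D2 = 0 := by
    ext i j
    rw [Matrix.mul_apply, Matrix.zero_apply]
    refine Finset.sum_eq_zero fun k _ => ?_
    by_cases hk : k ∈ S
    · rw [hD2row k hk j, mul_zero]
    · rw [hD1col k hk i, zero_mul]
  have hD21 : D2 * D1 = 0 := by
    ext i j
    rw [Matrix.mul_apply, Matrix.zero_apply]
    refine Finset.sum_eq_zero fun k _ => ?_
    by_cases hk : k ∈ S
    · rw [hD2col k hk i, zero_mul]
    · rw [hD1row k hk j, mul_zero]
  have hM0sq : M0 ^ 2 = Dm ^ 2 := by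
    have e1 : M0 ^ 2 = absM hD1herm * absM hD1herm + absM hD1herm * absM hD2herm
        + absM hD2herm * absM hD1herm + absM hD2herm * absM hD2herm := by
      rw [hM0def]; noncomm_ring
    have e2 : Dm ^ 2 = D1 * D1 + D1 * D2 + D2 * D1 + D2 * D2 := by
      rw [hsplit]; noncomm_ring
    rw [e1, e2, habs12, habs21, hD12, hD21, absM_sq hD1herm, absM_sq hD2herm]
  have habsDm : absM hDmherm = M0 := by
    open scoped MatrixOrder in refine (CFC.sq_eq_sq_iff _ _ (absM_posSemidef hDmherm).nonneg hM0psd.nonneg).mp ?_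
    rw [hM0sq, pow_two, pow_two, absM_sq hDmherm]
  have htrD : sumAbsEig Dm hDmherm = Matrix.trace (Dm * U0) := by
    rw [hDU0, ← habsDm, trace_absM]
  -- trace transfer
  have htrEq : Matrix.trace (Dm * U0) = Matrix.trace (A * U0) := by
    have hzero : Matrix.trace ((A - Dm) * U0) = 0 := by
      rw [Matrix.trace]
      refine Finset.sum_eq_zero fun i _ => ?_
      rw [Matrix.diag_apply, Matrix.mul_apply]
      refine Finset.sum_eq_zero fun k _ => ?_
      by_cases h : A i k = Dm i k
      · rw [Matrix.sub_apply, h, sub_self, zero_mul]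
      · rcases hA_D_ne i k h with ⟨hi, hk⟩ | ⟨hk, hi⟩
        · rw [hU0cross' k i hk (hi ▸ hv), mul_zero]
        · rw [hU0cross k i (hk ▸ hv) hi, mul_zero]
    have hsub : (A - Dm) * U0 = A * U0 - Dm * U0 := Matrix.sub_mul _ _ _
    rw [hsub, Matrix.trace_sub] at hzero
    linarith
  -- the trace inequality
  have hstar1 : star U0 * U0 = 1 := by rw [hU0star, hU0sq]
  have hstar2 : U0 * star U0 = 1 := by rw [hU0star, hU0sq]
  obtain ⟨hle, heqimp⟩ := trace_mul_le_and_eq hAherm U0 hstar1 hstar2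
  have hle2 : sumAbsEig Dm hDmherm ≤ sumAbsEig A hAherm := by
    rw [htrD, htrEq]; exact hle
  have hne2 : sumAbsEig Dm hDmherm ≠ sumAbsEig A hAherm := by
    intro heqE
    have htrA : Matrix.trace (A * U0) = sumAbsEig A hAherm := by
      rw [← htrEq, ← htrD, heqE]
    have hM : A * U0 = absM hAherm := heqimp htrA
    have hMpsd : (A * U0).PosSemidef := by rw [hM]; exact absM_posSemidef hAherm
    have hMsymm : ∀ i j, (A * U0) i j = (A * U0) j i := by
      intro i j
      rw [hM]
      exact conjD_comm hAherm _ i j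
    have hMrow0 : ∀ i, i ∈ S → i ≠ v → (A * U0) i j0 = 0 := by
      intro i hi hiv
      rw [Matrix.mul_apply]
      refine Finset.sum_eq_zero fun k _ => ?_
      by_cases hk : k ∈ S
      · rw [hU0cross k j0 hk hj0S, mul_zero]
      · rw [hA_cross i k hi hk hiv, zero_mul]
    have hMcolS : ∀ i, i ∈ S → (A * U0) j0 i = A j0 v * U0 v i := by
      intro i hi
      rw [Matrix.mul_apply]
      refine Finset.sum_eq_single v (fun k _ hkv => ?_) (fun h => absurd (Finset.mem_univ v) h)
      by_cases hk : k ∈ S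
      · rw [hA_cross' j0 k hj0S hk hkv, zero_mul]
      · rw [hU0cross' k i hk hi, mul_zero]
    have hAj0v : A j0 v = 1 := by rw [hAsymm j0 v, hAvj0]
    have hU0v0 : ∀ i, i ≠ v → U0 v i = 0 := by
      intro i hiv
      by_cases hi : i ∈ S
      · have h1 : (A * U0) i j0 = 0 := hMrow0 i hi hiv
        have h2 : (A * U0) j0 i = A j0 v * U0 v i := hMcolS i hi
        rw [← hMsymm i j0, h1, hAj0v, one_mul] at h2
        exact h2.symm
      · exact hU0cross v i hv hi
    have hu2 : U0 v v * U0 v v = 1 := by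
      have h : (U0 * U0) v v = (1 : Matrix V V ℝ) v v := by rw [hU0sq]
      rw [Matrix.mul_apply, Matrix.one_apply_eq] at h
      rw [← h]
      refine (Finset.sum_eq_single (f := fun k => U0 v k * U0 k v) v (fun k _ hkv => ?_)
        (fun h' => absurd (Finset.mem_univ v) h')).symm
      show U0 v k * U0 k v = 0
      rw [hU0v0 k hkv, zero_mul]
    have hAvv : A v v = 0 := by
      rw [hAdef, SimpleGraph.adjMatrix_apply, if_neg (G.irrefl)]
    have hMvv : (A * U0) v v = 0 := by
      rw [Matrix.mul_apply]
      refine Finset.sum_eq_zero fun k _ => ?_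
      by_cases hkv : k = v
      · subst hkv; rw [hAvv, zero_mul]
      · rw [hU0symm k v, hU0v0 k hkv, mul_zero]
    have hMj0v : (A * U0) j0 v = U0 v v := by
      rw [hMcolS v hv, hAj0v, one_mul]
    have hMvj0 : (A * U0) v j0 = U0 v v := (hMsymm v j0).trans hMj0v
    -- quadratic form contradiction
    set u := U0 v v with hu
    set m := (A * U0) j0 j0 with hmdef
    have hm0 : 0 ≤ m := by
      have h := hMpsd.dotProduct_mulVec_nonneg (fun k => (0:ℝ) * (if k = v then (1:ℝ) else 0) + (if k = j0 then 1 else 0))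
      rw [quad_expand (A * U0) v j0 hvj0 0] at h
      rw [hMvv, hMvj0, hMj0v] at h
      linarith
    set t : ℝ := -u * (m + 1) with ht
    have hval := hMpsd.dotProduct_mulVec_nonneg (fun k => t * (if k = v then (1:ℝ) else 0) + (if k = j0 then 1 else 0))
    rw [quad_expand (A * U0) v j0 hvj0 t, hMvv, hMvj0, hMj0v] at hval
    have htu : t * u = -(m + 1) := by
      rw [ht]
      calc -u * (m + 1) * u = -(u * u) * (m + 1) := by ring
        _ = -(m + 1) := by rw [hu2]; ring
    rw [mul_zero] at hval
    -- hval : 0 ≤ 0 + t * u + t * u + m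
    rw [htu] at hval
    linarith
  have hfinal : sumAbsEig Dm hDmherm < sumAbsEig A hAherm := lt_of_le_of_ne hle2 hne2
  rw [graphEnergy_eq_sumAbsEig Gd hDmherm, graphEnergy_eq_sumAbsEig G hAherm]
  exact hfinal
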